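/- Let ι be a finite type, θ : ι → ℝ with θ i < 0 for every i, and v : ι → ℕ. For a family of real numbers σ : (i : ι) → Fin (v i) → ℝ, let u i := the number of indices j : Fin (v i) with σ i j ≠ 0. Then Σ_i Σ_j θ i * σ i j ≤ Real.sqrt (Σ_i (u i : ℝ) * |θ i|) * Real.sqrt (Σ_i Σ_j |θ i| * (σ i j)^2). Moreover, if σ is not identically zero, then equality holds if and only if there exists c > 0 such that σ i j = −c for every pair (i, j) with σ i j ≠ 0. -/

import Mathlib

open RealInnerProductSpace

/-- Cauchy–Schwarz bound for the Kempf–Ness numerical invariant with prescribed support: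
with `u i` the number of nonzero entries of `σ` in the `i`-th block, one has
`∑ᵢ∑ⱼ θ i * σ i j ≤ √(∑ᵢ u i * |θ i|) * √(∑ᵢ∑ⱼ |θ i| * (σ i j)²)`, and for nonzero `σ`,
equality holds iff all nonzero entries `σ i j` equal a common negative number `-c`. -/
theorem kempfNess_cauchySchwarz_support {ι : Type*} [Fintype ι]
    (θ : ι → ℝ) (hθ : ∀ i, θ i < 0) (v : ι → ℕ)
    (σ : (i : ι) → Fin (v i) → ℝ)
    (u : ι → ℕ) (hu : ∀ i, u i = Nat.card {j : Fin (v i) // σ i j ≠ 0}) :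
    ((∑ i, ∑ j, θ i * σ i j) ≤
        Real.sqrt (∑ i, (u i : ℝ) * |θ i|) *
          Real.sqrt (∑ i, ∑ j, |θ i| * σ i j ^ 2)) ∧
      (σ ≠ 0 →
        ((∑ i, ∑ j, θ i * σ i j) =
            Real.sqrt (∑ i, (u i : ℝ) * |θ i|) *
              Real.sqrt (∑ i, ∑ j, |θ i| * σ i j ^ 2) ↔
          ∃ c : ℝ, 0 < c ∧ ∀ (i : ι) (j : Fin (v i)), σ i j ≠ 0 → σ i j = -c)) := by
  classical
  have hθabs : ∀ i, |θ i| = -θ i := fun i => abs_of_neg (hθ i)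
  have hθpos : ∀ i, 0 < |θ i| := fun i => abs_pos.mpr (hθ i).ne
  have hsq : ∀ i, Real.sqrt |θ i| * Real.sqrt |θ i| = |θ i| :=
    fun i => Real.mul_self_sqrt (abs_nonneg _)
  have hsqne : ∀ i, Real.sqrt |θ i| ≠ 0 :=
    fun i => (Real.sqrt_pos.mpr (hθpos i)).ne'
  set x : EuclideanSpace ℝ ((i : ι) × Fin (v i)) :=
    WithLp.toLp 2 (fun s : (i : ι) × Fin (v i) => Real.sqrt |θ s.1| * (if σ s.1 s.2 ≠ 0 then 1 else 0)) with hx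
  set y : EuclideanSpace ℝ ((i : ι) × Fin (v i)) :=
    WithLp.toLp 2 (fun s : (i : ι) × Fin (v i) => Real.sqrt |θ s.1| * (-σ s.1 s.2)) with hy
  have hinner : ⟪x, y⟫ = ∑ i, ∑ j, θ i * σ i j := by
    rw [PiLp.inner_apply]
    simp only [RCLike.inner_apply, conj_trivial, hx, hy]
    rw [← Finset.univ_sigma_univ, Finset.sum_sigma]
    refine Finset.sum_congr rfl fun i _ => Finset.sum_congr rfl fun j _ => ?_
    by_cases h : σ i j = 0
    · simp [h]
    · simp only [h, ne_eq, not_false_iff, if_true, mul_one]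
      rw [mul_comm, ← mul_assoc, hsq i, hθabs i]
      ring
  have hnx : ‖x‖ = Real.sqrt (∑ i, (u i : ℝ) * |θ i|) := by
    rw [EuclideanSpace.norm_eq]
    congr 1
    simp only [Real.norm_eq_abs, sq_abs, hx]
    rw [← Finset.univ_sigma_univ, Finset.sum_sigma]
    refine Finset.sum_congr rfl fun i _ => ?_
    have key : ∀ j : Fin (v i),
        (Real.sqrt |θ i| * (if σ i j ≠ 0 then (1:ℝ) else 0)) ^ 2 =
          |θ i| * (if σ i j ≠ 0 then (1:ℝ) else 0) := by
      intro j
      by_cases h : σ i j = 0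
      · simp [h]
      · simp only [h, ne_eq, not_false_iff, if_true, mul_one, one_pow]
        rw [Real.sq_sqrt (abs_nonneg _)]
    rw [Finset.sum_congr rfl fun j _ => key j, ← Finset.mul_sum,
      Finset.sum_boole, hu i, Nat.card_eq_fintype_card, Fintype.card_subtype]
    ring
  have hny : ‖y‖ = Real.sqrt (∑ i, ∑ j, |θ i| * σ i j ^ 2) := by
    rw [EuclideanSpace.norm_eq]
    congr 1
    simp only [Real.norm_eq_abs, sq_abs, hy]
    rw [← Finset.univ_sigma_univ, Finset.sum_sigma]
    refine Finset.sum_congr rfl fun i _ => Finset.sum_congr rfl fun j _ => ?_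
    rw [mul_pow, Real.sq_sqrt (abs_nonneg _)]
    ring
  constructor
  · rw [← hinner, ← hnx, ← hny]
    exact real_inner_le_norm x y
  · intro hσ
    obtain ⟨i0, hi0⟩ := Function.ne_iff.mp hσ
    obtain ⟨j0, hj0⟩ := Function.ne_iff.mp hi0
    simp only [Pi.zero_apply] at hj0
    have hxne : x ≠ 0 := by
      intro h
      have := congrArg (fun z : EuclideanSpace ℝ ((i : ι) × Fin (v i)) => z ⟨i0, j0⟩) h
      simp only [hx, hj0, ne_eq, not_false_iff, if_true, mul_one] at this
      exact hsqne i0 this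
    have hyne : y ≠ 0 := by
      intro h
      have := congrArg (fun z : EuclideanSpace ℝ ((i : ι) × Fin (v i)) => z ⟨i0, j0⟩) h
      simp only [hy] at this
      rcases mul_eq_zero.mp this with h' | h'
      · exact hsqne i0 h'
      · exact hj0 (neg_eq_zero.mp h')
    have hxpos : 0 < ‖x‖ := norm_pos_iff.mpr hxne
    have hypos : 0 < ‖y‖ := norm_pos_iff.mpr hyne
    rw [← hinner, ← hnx, ← hny, inner_eq_norm_mul_iff_real]
    constructor
    · intro h
      refine ⟨‖y‖ / ‖x‖, div_pos hypos hxpos, fun i j hij => ?_⟩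
      have h' : ‖y‖ * x ⟨i, j⟩ = ‖x‖ * y ⟨i, j⟩ := congrArg (fun z : EuclideanSpace ℝ ((i : ι) × Fin (v i)) => z ⟨i, j⟩) h
      have hxv : x ⟨i, j⟩ = Real.sqrt |θ i| := by simp [hx, hij]
      have hyv : y ⟨i, j⟩ = Real.sqrt |θ i| * -σ i j := rfl
      rw [hxv, hyv] at h'
      have h2 : ‖y‖ = ‖x‖ * -σ i j :=
        mul_left_cancel₀ (hsqne i) (by linear_combination h')
      rw [h2]
      field_simp
    · rintro ⟨c, hc, hcs⟩
      have hyx : y = c • x := by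
        ext s
        show Real.sqrt |θ s.1| * (-σ s.1 s.2) =
          c * (Real.sqrt |θ s.1| * (if σ s.1 s.2 ≠ 0 then 1 else 0))
        by_cases h : σ s.1 s.2 = 0
        · simp [h]
        · rw [if_pos h, hcs s.1 s.2 h]
          ring
      have hnyx : ‖y‖ = c * ‖x‖ := by
        rw [hyx, norm_smul, Real.norm_eq_abs, abs_of_pos hc]
      rw [hnyx, hyx, smul_smul, mul_comm c ‖x‖]
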